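/- Let G be a simple connected graph on n vertices with diameter d ≥ 3 and distance spectral radius ∂_1. Then ∂_1 > n - 2 + d. -/

import Mathlib

set_option linter.unusedSectionVars false

open Finset

namespace DistPaper

variable {V : Type*} [Fintype V] [DecidableEq V]

/-- The distance matrix of a graph: the `(u,v)` entry is the graph distance. -/
noncomputable def distMatrix (G : SimpleGraph V) : Matrix V V ℝ :=
  fun u v => (G.dist u v : ℝ)

lemma isHermitian_distMatrix (G : SimpleGraph V) : (distMatrix G).IsHermitian := by
  ext u v
  simp [distMatrix, Matrix.conjTranspose_apply, SimpleGraph.dist_comm]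

/-- The `k`-th largest eigenvalue (1-indexed, so `k = 1` is the largest) of the
distance matrix of `G`; junk value `0` if `k - 1 ≥ |V|`. -/
noncomputable def distEig (G : SimpleGraph V) (k : ℕ) : ℝ :=
  if h : k - 1 < Fintype.card V then
    ((isHermitian_distMatrix G).eigenvalues ∘ (Fintype.equivFin V).symm)
      (Tuple.sort ((isHermitian_distMatrix G).eigenvalues ∘ (Fintype.equivFin V).symm)
        (Fin.rev ⟨k - 1, h⟩))
  else 0

/-- The transmission of a vertex: the sum of the distances to all other vertices. -/
noncomputable def transmission (G : SimpleGraph V) (v : V) : ℕ :=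
  ∑ u, G.dist v u

/-- The remoteness of a graph: the maximum over all vertices of the average
distance from that vertex to the others, `ρ = max_v Tr(v)/(n-1)`. -/
noncomputable def remoteness (G : SimpleGraph V) : ℝ :=
  ((univ.sup (transmission G) : ℕ) : ℝ) / ((Fintype.card V : ℝ) - 1)

/-- `G` is a complete multipartite graph: vertices can be classified so that two
vertices are adjacent iff they lie in different classes. -/
def IsCompleteMultipartite (G : SimpleGraph V) : Prop :=
  ∃ f : V → V, ∀ u v, G.Adj u v ↔ f u ≠ f v

/-- The `k`-th largest eigenvalue (1-indexed) of the Laplacian matrix of `G`;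
junk value `0` if `k - 1 ≥ |V|`. -/
noncomputable def lapEig (G : SimpleGraph V) (k : ℕ) : ℝ := by
  classical
  exact if h : k - 1 < Fintype.card V then
    (((SimpleGraph.posSemidef_lapMatrix ℝ G).1).eigenvalues ∘ (Fintype.equivFin V).symm)
      (Tuple.sort ((((SimpleGraph.posSemidef_lapMatrix ℝ G)).1).eigenvalues ∘ (Fintype.equivFin V).symm)
        (Fin.rev ⟨k - 1, h⟩))
  else 0

/-- The Wiener index: the sum of distances over unordered pairs of vertices. -/
noncomputable def wienerIndex (G : SimpleGraph V) : ℝ :=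
  (∑ u, ∑ v, (G.dist u v : ℝ)) / 2



section Aux

open Matrix in
lemma quad_le_of_eig_le (A : Matrix V V ℝ) (hA : A.IsHermitian) (μ : ℝ)
    (hμ : ∀ i, hA.eigenvalues i ≤ μ) (x : V → ℝ) :
    x ⬝ᵥ A.mulVec x ≤ μ * (x ⬝ᵥ x) := by
  classical
  set U : Matrix V V ℝ := (hA.eigenvectorUnitary : Matrix V V ℝ) with hUdef
  have hstar : star U = Uᵀ := by
    ext i j
    simp [Matrix.star_apply]
  have hUU : U * Uᵀ = 1 := by
    rw [← hstar]
    exact (Matrix.mem_unitaryGroup_iff).mp hA.eigenvectorUnitary.2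
  set y : V → ℝ := Uᵀ *ᵥ x with hy
  have hdecomp : A = U * Matrix.diagonal hA.eigenvalues * Uᵀ := by
    have h := hA.spectral_theorem
    rw [Unitary.conjStarAlgAut_apply, hstar] at h
    exact h.trans rfl
  have hform : x ⬝ᵥ ((U * Matrix.diagonal hA.eigenvalues * Uᵀ) *ᵥ x)
      = ∑ i, hA.eigenvalues i * (y i)^2 := by
    rw [← Matrix.mulVec_mulVec, ← Matrix.mulVec_mulVec,
      Matrix.dotProduct_mulVec, ← Matrix.mulVec_transpose, ← hy]
    simp only [dotProduct, Matrix.mulVec_diagonal]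
    apply Finset.sum_congr rfl
    intro i _
    ring
  rw [← hdecomp] at hform
  have hnorm : x ⬝ᵥ x = ∑ i, (y i)^2 := by
    have : y ⬝ᵥ y = x ⬝ᵥ x := by
      rw [hy, Matrix.dotProduct_mulVec, Matrix.vecMul_transpose,
        Matrix.mulVec_mulVec, hUU, Matrix.one_mulVec]
    rw [← this]
    simp [dotProduct, sq]
  rw [show x ⬝ᵥ A.mulVec x = x ⬝ᵥ A *ᵥ x from rfl, hform, hnorm, Finset.mul_sum]
  apply Finset.sum_le_sum
  intro i _
  have := sq_nonneg (y i)
  nlinarith [hμ i]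

lemma eig_le_distEig (G : SimpleGraph V) (hV : 0 < Fintype.card V) (i : V) :
    (isHermitian_distMatrix G).eigenvalues i ≤ distEig G 1 := by
  classical
  have h : 1 - 1 < Fintype.card V := by simpa using hV
  rw [distEig, dif_pos h]
  set f := (isHermitian_distMatrix G).eigenvalues ∘ (Fintype.equivFin V).symm with hf
  have h1 : (isHermitian_distMatrix G).eigenvalues i = f (Fintype.equivFin V i) := by
    simp [hf]
  rw [h1]
  set j := Fintype.equivFin V i with hj
  have h2 : f j = (f ∘ Tuple.sort f) ((Tuple.sort f).symm j) := by simp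
  rw [h2]
  apply Tuple.monotone_sort f
  have e : (Fin.rev ⟨1-1, h⟩ : Fin (Fintype.card V)).val = Fintype.card V - 1 := by
    simp [Fin.val_rev]
  rw [Fin.le_def, e]
  have := ((Tuple.sort f).symm j).isLt
  omega

end Aux

/-- For a simple connected graph on `n` vertices with diameter `d ≥ 3`,
the distance spectral radius satisfies `∂_1 > n - 2 + d`. -/
theorem distSpectralRadius_gt (n : ℕ) (G : SimpleGraph (Fin n))
    (hconn : G.Connected) (hd : 3 ≤ G.diam) :
    (n : ℝ) - 2 + (G.diam : ℝ) < distEig G 1 := by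
  classical
  have hnon : Nonempty (Fin n) := hconn.nonempty
  obtain ⟨u, w, huw⟩ := G.exists_dist_eq_diam
  set d : ℕ := G.diam with hdd
  have hd3 : 3 ≤ d := hd
  have hduw : G.dist u w = d := huw
  have huw_ne : u ≠ w := by
    intro h
    rw [h, SimpleGraph.dist_self] at hduw
    omega
  -- a third vertex
  have hdist_ne : G.dist u w ≠ 0 := by omega
  obtain ⟨p, hp⟩ := SimpleGraph.exists_walk_of_dist_ne_zero hdist_ne
  have hpnil : ¬ p.Nil := by
    rw [SimpleGraph.Walk.nil_iff_length_eq, hp]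
    omega
  set z := p.getVert 1 with hz
  have hadj : G.Adj u z := p.adj_snd hpnil
  have hz_u : z ≠ u := fun h => (G.loopless.irrefl u) (h ▸ hadj)
  have hz_w : z ≠ w := by
    intro h
    have h1 : G.dist u w = 1 := SimpleGraph.dist_eq_one_iff_adj.mpr (h ▸ hadj)
    omega
  set s : Finset (Fin n) := univ \ {u, w} with hs
  have hmem : ∀ a : Fin n, a ∈ s ↔ a ≠ u ∧ a ≠ w := by
    intro a; simp [hs]
  have hzs : z ∈ s := (hmem z).mpr ⟨hz_u, hz_w⟩
  have hw_s : w ∉ s := by simp [hs]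
  have hu_ws : u ∉ insert w s := by simp [hs, huw_ne]
  have huniv : (univ : Finset (Fin n)) = insert u (insert w s) := by
    ext a
    by_cases hau : a = u <;> by_cases haw : a = w <;> simp [hs, hau, haw]
  set m : ℕ := s.card with hmdef
  have hm1 : 1 ≤ m := Finset.card_pos.mpr ⟨z, hzs⟩
  have hcard : n = m + 2 := by
    have h := congrArg Finset.card huniv
    rw [Finset.card_insert_of_notMem hu_ws, Finset.card_insert_of_notMem hw_s,
      Finset.card_fin] at h
    omega
  have hsplit : ∀ g : Fin n → ℝ, ∑ a, g a = g u + g w + ∑ a ∈ s, g a := by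
    intro g
    rw [huniv, Finset.sum_insert hu_ws, Finset.sum_insert hw_s]
    ring
  set c : ℝ := (d : ℝ) / 2 with hc
  have hc0 : 0 ≤ c := by positivity
  set x : Fin n → ℝ := fun a => if a = u ∨ a = w then c else 1 with hx
  have hxu : x u = c := by simp [hx]
  have hxw : x w = c := by simp [hx]
  have hxs : ∀ a ∈ s, x a = 1 := by
    intro a ha
    obtain ⟨h1, h2⟩ := (hmem a).mp ha
    simp [hx, h1, h2]
  have hd_uu : (G.dist u u : ℝ) = 0 := by simp
  have hd_ww : (G.dist w w : ℝ) = 0 := by simp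
  have hd_uw : (G.dist u w : ℝ) = (d : ℝ) := by exact_mod_cast hduw
  have hd_wu : (G.dist w u : ℝ) = (d : ℝ) := by
    rw [SimpleGraph.dist_comm]; exact hd_uw
  have hrow : ∀ a, ((distMatrix G).mulVec x) a
      = c * (G.dist a u : ℝ) + c * (G.dist a w : ℝ) + ∑ b ∈ s, (G.dist a b : ℝ) := by
    intro a
    have e0 : ((distMatrix G).mulVec x) a = ∑ b, (G.dist a b : ℝ) * x b := rfl
    have hss : ∑ b ∈ s, (G.dist a b : ℝ) * x b = ∑ b ∈ s, (G.dist a b : ℝ) :=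
      Finset.sum_congr rfl (fun b hb => by rw [hxs b hb, mul_one])
    rw [e0, hsplit, hss, hxu, hxw]
    ring
  have hcomm1 : ∑ a ∈ s, (G.dist a u : ℝ) = ∑ a ∈ s, (G.dist u a : ℝ) :=
    Finset.sum_congr rfl fun a _ => by rw [SimpleGraph.dist_comm]
  have hcomm2 : ∑ a ∈ s, (G.dist a w : ℝ) = ∑ a ∈ s, (G.dist w a : ℝ) :=
    Finset.sum_congr rfl fun a _ => by rw [SimpleGraph.dist_comm]
  have hQ : dotProduct x ((distMatrix G).mulVec x)
      = 2*c^2*(d:ℝ) + 2*c*((∑ a ∈ s, (G.dist u a : ℝ)) + (∑ a ∈ s, (G.dist w a : ℝ)))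
        + ∑ a ∈ s, ∑ b ∈ s, (G.dist a b : ℝ) := by
    have e0 : dotProduct x ((distMatrix G).mulVec x)
        = ∑ a, x a * ((distMatrix G).mulVec x) a := rfl
    have hsum_s : ∑ a ∈ s, (x a * ((distMatrix G).mulVec x) a)
        = c * (∑ a ∈ s, (G.dist u a : ℝ)) + c * (∑ a ∈ s, (G.dist w a : ℝ))
          + ∑ a ∈ s, ∑ b ∈ s, (G.dist a b : ℝ) := by
      rw [Finset.mul_sum, Finset.mul_sum, ← Finset.sum_add_distrib, ← Finset.sum_add_distrib]
      apply Finset.sum_congr rfl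
      intro a ha
      rw [hxs a ha, one_mul, hrow a,
        show G.dist a u = G.dist u a from SimpleGraph.dist_comm,
        show G.dist a w = G.dist w a from SimpleGraph.dist_comm]
    rw [e0, hsplit, hxu, hxw, hrow u, hrow w, hsum_s, hd_uu, hd_ww, hd_uw, hd_wu]
    ring
  -- lower bounds
  have hB1 : (m : ℝ) * (d : ℝ) ≤ (∑ a ∈ s, (G.dist u a : ℝ)) + (∑ a ∈ s, (G.dist w a : ℝ)) := by
    rw [← Finset.sum_add_distrib]
    have : ∀ a ∈ s, (d : ℝ) ≤ (G.dist u a : ℝ) + (G.dist w a : ℝ) := by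
      intro a _
      have ht := hconn.dist_triangle (u := u) (v := a) (w := w)
      rw [hduw] at ht
      have : (G.dist a w : ℝ) = (G.dist w a : ℝ) := by rw [SimpleGraph.dist_comm]
      rw [← this]
      exact_mod_cast ht
    calc (m : ℝ) * (d : ℝ) = ∑ _a ∈ s, (d : ℝ) := by rw [Finset.sum_const]; simp [hmdef]
    _ ≤ _ := Finset.sum_le_sum this
  have hA1 : (m : ℝ) * ((m : ℝ) - 1) ≤ ∑ a ∈ s, ∑ b ∈ s, (G.dist a b : ℝ) := by
    have hinner : ∀ a ∈ s, (m : ℝ) - 1 ≤ ∑ b ∈ s, (G.dist a b : ℝ) := by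
      intro a ha
      have h1 : ∑ _b ∈ s.erase a, (1:ℝ) ≤ ∑ b ∈ s.erase a, (G.dist a b : ℝ) := by
        apply Finset.sum_le_sum
        intro b hb
        have hba : a ≠ b := (Finset.ne_of_mem_erase hb).symm
        have := hconn.pos_dist_of_ne hba
        exact_mod_cast this
      have h2 : ∑ b ∈ s.erase a, (G.dist a b : ℝ) ≤ ∑ b ∈ s, (G.dist a b : ℝ) := by
        apply Finset.sum_le_sum_of_subset_of_nonneg (Finset.erase_subset a s)
        intro b _ _
        positivity
      have h3 : ∑ _b ∈ s.erase a, (1:ℝ) = (m : ℝ) - 1 := by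
        have h4 : (1:ℕ) ≤ s.card := hm1
        rw [Finset.sum_const, Finset.card_erase_of_mem ha, nsmul_eq_mul, mul_one,
          Nat.cast_sub h4, Nat.cast_one, hmdef]
      linarith
    calc (m : ℝ) * ((m : ℝ) - 1) = ∑ _a ∈ s, ((m : ℝ) - 1) := by
          rw [Finset.sum_const]; simp [hmdef]
    _ ≤ _ := Finset.sum_le_sum hinner
  have hxx : dotProduct x x = 2*c^2 + (m : ℝ) := by
    have e0 : dotProduct x x = ∑ a, x a * x a := rfl
    have hss : ∑ a ∈ s, x a * x a = ∑ _a ∈ s, (1:ℝ) :=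
      Finset.sum_congr rfl (fun a ha => by rw [hxs a ha, one_mul])
    rw [e0, hsplit, hxu, hxw, hss, Finset.sum_const, nsmul_eq_mul, mul_one, hmdef]
    ring
  have hxxpos : 0 < dotProduct x x := by
    rw [hxx]
    have : (1:ℝ) ≤ (m:ℝ) := by exact_mod_cast hm1
    nlinarith [sq_nonneg c]
  have hd3' : (3:ℝ) ≤ (d:ℝ) := by exact_mod_cast hd3
  have hm1' : (1:ℝ) ≤ (m:ℝ) := by exact_mod_cast hm1
  have hB2 : 2*c*((m : ℝ) * (d : ℝ))
      ≤ 2*c*((∑ a ∈ s, (G.dist u a : ℝ)) + (∑ a ∈ s, (G.dist w a : ℝ))) :=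
    mul_le_mul_of_nonneg_left hB1 (by positivity)
  have e1 : 0 < (m:ℝ) * ((d:ℝ)^2/2 - (d:ℝ) - 1) := by
    have h9 : (0:ℝ) < (d:ℝ)^2/2 - (d:ℝ) - 1 := by
      nlinarith [hd3', mul_self_nonneg ((d:ℝ) - 3)]
    exact mul_pos (by linarith) h9
  have hfinal : ((m:ℝ) + (d:ℝ)) * dotProduct x x
      < dotProduct x ((distMatrix G).mulVec x) := by
    rw [hQ, hxx, hc]
    rw [hc] at hB2
    nlinarith [hA1, hB2, e1]
  have hray := quad_le_of_eig_le (distMatrix G) (isHermitian_distMatrix G) (distEig G 1)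
    (fun i => eig_le_distEig G (by rw [Fintype.card_fin]; omega) i) x
  have hlt : ((m:ℝ) + (d:ℝ)) * dotProduct x x
      < distEig G 1 * dotProduct x x := lt_of_lt_of_le hfinal hray
  have hmain : (m:ℝ) + (d:ℝ) < distEig G 1 := (mul_lt_mul_iff_of_pos_right hxxpos).mp hlt
  have hn : (n:ℝ) = (m:ℝ) + 2 := by rw [hcard]; push_cast; ring
  have hgd : (G.diam : ℝ) = (d : ℝ) := rfl
  rw [hn, hgd]
  linarith


end DistPaper
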